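/- Let f : ℝⁿ → ℝ ∪ {+∞} be a symmetric function (invariant under all coordinate permutations). Then its Fenchel conjugate f* is also symmetric, and the spectral functions satisfy (f ∘ λ)* = f* ∘ λ on the space of symmetric matrices Sⁿ. -/

import Mathlib

open Matrix

variable {n : ℕ}

/-- Dot product on `Fin n → ℝ`. -/
def dotp (v w : Fin n → ℝ) : ℝ := ∑ i, v i * w i

/-- Fenchel conjugate of an extended-real-valued function on `ℝⁿ`. -/
noncomputable def fconj (f : (Fin n → ℝ) → EReal) (y : Fin n → ℝ) : EReal :=
  ⨆ x : Fin n → ℝ, ((dotp x y : ℝ) : EReal) - f x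

/-- Fenchel conjugate on the space of symmetric matrices, with the trace inner product. -/
noncomputable def mconj (F : Matrix (Fin n) (Fin n) ℝ → EReal) (Y : Matrix (Fin n) (Fin n) ℝ) : EReal :=
  ⨆ X : {A : Matrix (Fin n) (Fin n) ℝ // A.IsSymm},
    ((Matrix.trace (X.1 * Y) : ℝ) : EReal) - F X.1

/-- `x` is the nonincreasing eigenvalue vector of `X`. -/
def eigPred (X : Matrix (Fin n) (Fin n) ℝ) (x : Fin n → ℝ) : Prop :=
  Antitone x ∧ ∃ U : Matrix (Fin n) (Fin n) ℝ, Uᵀ * U = 1 ∧ X = Uᵀ * Matrix.diagonal x * U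

/- ### Auxiliary lemmas -/

lemma aux_permMatrix_transpose (σ : Equiv.Perm (Fin n)) :
    (σ.permMatrix ℝ)ᵀ = ((σ⁻¹ : Equiv.Perm (Fin n)).permMatrix ℝ) := by
  ext i j
  simp only [transpose_apply, PEquiv.toMatrix_apply, Equiv.toPEquiv_apply, Option.mem_def,
    Option.some.injEq]
  by_cases h : σ j = i
  · have h' : σ⁻¹ i = j := by rw [← h]; exact σ.symm_apply_apply j
    simp [h, h']
  · have h' : σ⁻¹ i ≠ j := fun hh => h (by rw [← hh]; exact σ.apply_symm_apply i)
    simp [h]; exact h'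

lemma aux_permMatrix_eq (σ : Equiv.Perm (Fin n)) :
    σ.permMatrix ℝ = (1 : Matrix (Fin n) (Fin n) ℝ).submatrix σ id := by
  simpa using PEquiv.toMatrix_toPEquiv_mul σ (1 : Matrix (Fin n) (Fin n) ℝ)

lemma aux_perm_conj (d : Fin n → ℝ) (σ : Equiv.Perm (Fin n)) :
    ∃ P : Matrix (Fin n) (Fin n) ℝ, Pᵀ * P = 1 ∧
      Pᵀ * Matrix.diagonal (d ∘ σ) * P = Matrix.diagonal d := by
  refine ⟨σ.permMatrix ℝ, ?_, ?_⟩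
  · rw [aux_permMatrix_transpose, PEquiv.toMatrix_toPEquiv_mul, aux_permMatrix_eq,
      Matrix.submatrix_submatrix]
    have h1 : (⇑σ ∘ ⇑σ⁻¹ : Fin n → Fin n) = id := by
      funext i; exact σ.apply_symm_apply i
    rw [h1]
    simp
  · rw [aux_permMatrix_transpose, Matrix.mul_assoc, PEquiv.mul_toMatrix_toPEquiv,
      PEquiv.toMatrix_toPEquiv_mul, Matrix.submatrix_submatrix, Function.comp_id,
      Function.id_comp]
    have h2 : (⇑σ⁻¹ : Fin n → Fin n) = ⇑σ.symm := rfl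
    rw [h2, Matrix.submatrix_diagonal_equiv]
    have h3 : ((d ∘ ⇑σ) ∘ ⇑σ.symm) = d := by
      funext i
      show d (σ (σ.symm i)) = d i
      rw [Equiv.apply_symm_apply]
    rw [h3]

lemma aux_exists_antitone (x : Fin n → ℝ) : ∃ σ : Equiv.Perm (Fin n), Antitone (x ∘ σ) := by
  refine ⟨Tuple.sort (-x), fun i j hij => ?_⟩
  have := Tuple.monotone_sort (-x) hij
  simpa using this

lemma aux_eig_of_decomp (U : Matrix (Fin n) (Fin n) ℝ) (x : Fin n → ℝ) (hU : Uᵀ * U = 1) :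
    ∃ σ : Equiv.Perm (Fin n), eigPred (Uᵀ * Matrix.diagonal x * U) (x ∘ σ) := by
  obtain ⟨σ, hσ⟩ := aux_exists_antitone x
  obtain ⟨P, hP1, hP2⟩ := aux_perm_conj x σ
  refine ⟨σ, hσ, P * U, ?_, ?_⟩
  · calc (P * U)ᵀ * (P * U) = Uᵀ * (Pᵀ * P) * U := by
          rw [Matrix.transpose_mul]; noncomm_ring
      _ = 1 := by rw [hP1, Matrix.mul_one, hU]
  · calc Uᵀ * Matrix.diagonal x * U = Uᵀ * (Pᵀ * Matrix.diagonal (x ∘ σ) * P) * U := by rw [hP2]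
      _ = (P * U)ᵀ * Matrix.diagonal (x ∘ σ) * (P * U) := by
          rw [Matrix.transpose_mul]; noncomm_ring

lemma aux_eig_exists (X : Matrix (Fin n) (Fin n) ℝ) (hX : X.IsSymm) : ∃ x, eigPred X x := by
  have hH : X.IsHermitian := by
    rwa [Matrix.IsHermitian, Matrix.conjTranspose_eq_transpose_of_trivial]
  set e : Fin n → ℝ := hH.eigenvalues with he
  set W : Matrix (Fin n) (Fin n) ℝ := (hH.eigenvectorUnitary : Matrix (Fin n) (Fin n) ℝ) with hW
  have hstar : star W = Wᵀ := by
    rw [Matrix.star_eq_conjTranspose, Matrix.conjTranspose_eq_transpose_of_trivial]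
  have hdiag : Matrix.diagonal (RCLike.ofReal ∘ e) = Matrix.diagonal e := by
    rw [RCLike.ofReal_real_eq_id]; rfl
  have hXd : X = (Wᵀ)ᵀ * Matrix.diagonal e * Wᵀ := by
    rw [Matrix.transpose_transpose, ← hstar, ← hdiag]
    exact hH.spectral_theorem
  have hUU : (Wᵀ)ᵀ * Wᵀ = 1 := by
    rw [Matrix.transpose_transpose, ← hstar]
    exact (Matrix.mem_unitaryGroup_iff).mp hH.eigenvectorUnitary.2
  obtain ⟨σ, hσ⟩ := aux_eig_of_decomp Wᵀ e hUU
  refine ⟨e ∘ σ, ?_⟩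
  rw [hXd]
  exact hσ

lemma aux_monovary {a b : Fin n → ℝ} (ha : Antitone a) (hb : Antitone b) : Monovary a b := by
  intro i j hg
  rcases le_total i j with h | h
  · exact absurd (hb h) (not_le.2 hg)
  · exact ha h

lemma aux_ds_rearrange (S : Matrix (Fin n) (Fin n) ℝ) (hS : S ∈ doublyStochastic ℝ (Fin n))
    {a b : Fin n → ℝ} (ha : Antitone a) (hb : Antitone b) :
    ∑ i, ∑ j, S i j * (a i * b j) ≤ ∑ i, a i * b i := by
  obtain ⟨w, hw0, hw1, hwS⟩ := exists_eq_sum_perm_of_mem_doublyStochastic hS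
  have hterm : ∀ i j, S i j = ∑ σ : Equiv.Perm (Fin n), w σ * (if σ i = j then (1:ℝ) else 0) := by
    intro i j
    rw [← hwS]
    simp [Matrix.sum_apply, PEquiv.toMatrix_apply, Equiv.toPEquiv_apply, mul_ite]
  have hrow : ∀ i, ∑ j, (∑ σ : Equiv.Perm (Fin n), w σ * (if σ i = j then (1:ℝ) else 0))
        * (a i * b j) = ∑ σ : Equiv.Perm (Fin n), w σ * (a i * b (σ i)) := by
    intro i
    simp only [Finset.sum_mul]
    rw [Finset.sum_comm]
    refine Finset.sum_congr rfl fun σ _ => ?_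
    simp [mul_ite, ite_mul, Finset.sum_ite_eq]
  calc ∑ i, ∑ j, S i j * (a i * b j)
      = ∑ i, ∑ σ : Equiv.Perm (Fin n), w σ * (a i * b (σ i)) := by
        refine Finset.sum_congr rfl fun i _ => ?_
        rw [← hrow i]
        refine Finset.sum_congr rfl fun j _ => by rw [← hterm]
    _ = ∑ σ : Equiv.Perm (Fin n), w σ * ∑ i, a i * b (σ i) := by
        rw [Finset.sum_comm]
        exact Finset.sum_congr rfl fun σ _ => by rw [Finset.mul_sum]
    _ ≤ ∑ σ : Equiv.Perm (Fin n), w σ * ∑ i, a i * b i := by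
        refine Finset.sum_le_sum fun σ _ => ?_
        exact mul_le_mul_of_nonneg_left
          ((aux_monovary ha hb).sum_mul_comp_perm_le_sum_mul (σ := σ)) (hw0 σ)
    _ = ∑ i, a i * b i := by rw [← Finset.sum_mul, hw1, one_mul]

lemma aux_trace_le {X Y : Matrix (Fin n) (Fin n) ℝ} {x y : Fin n → ℝ}
    (hX : eigPred X x) (hY : eigPred Y y) :
    Matrix.trace (X * Y) ≤ dotp x y := by
  obtain ⟨hxa, U, hU, hXd⟩ := hX
  obtain ⟨hya, V, hV, hYd⟩ := hY
  have hUU : U * Uᵀ = 1 := mul_eq_one_comm.mp hU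
  set Q : Matrix (Fin n) (Fin n) ℝ := U * Vᵀ with hQ
  have hQ1 : Q * Qᵀ = 1 := by
    rw [hQ, Matrix.transpose_mul, Matrix.transpose_transpose]
    calc U * Vᵀ * (V * Uᵀ) = U * (Vᵀ * V) * Uᵀ := by noncomm_ring
      _ = 1 := by rw [hV, Matrix.mul_one, hUU]
  have hQ2 : Qᵀ * Q = 1 := mul_eq_one_comm.mp hQ1
  have h3 : ∀ j, (Qᵀ * (Matrix.diagonal x * Q)) j j = ∑ i, (Q i j)^2 * x i := by
    intro j
    rw [Matrix.mul_apply]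
    refine Finset.sum_congr rfl fun i _ => ?_
    rw [Matrix.diagonal_mul, Matrix.transpose_apply]
    ring
  have htr : Matrix.trace (X * Y) = ∑ i, ∑ j, (Q i j)^2 * (x i * y j) := by
    have h1 : X * Y = Uᵀ * Matrix.diagonal x * Q * Matrix.diagonal y * V := by
      rw [hXd, hYd, hQ]; noncomm_ring
    rw [h1, Matrix.trace_mul_comm (Uᵀ * Matrix.diagonal x * Q * Matrix.diagonal y) V]
    have h2 : V * (Uᵀ * Matrix.diagonal x * Q * Matrix.diagonal y)
        = (Qᵀ * (Matrix.diagonal x * Q)) * Matrix.diagonal y := by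
      rw [hQ, Matrix.transpose_mul, Matrix.transpose_transpose]; noncomm_ring
    rw [h2, Matrix.trace]
    calc ∑ j, ((Qᵀ * (Matrix.diagonal x * Q)) * Matrix.diagonal y).diag j
        = ∑ j, (∑ i, (Q i j)^2 * x i) * y j := by
          refine Finset.sum_congr rfl fun j _ => ?_
          rw [Matrix.diag_apply, Matrix.mul_diagonal, h3 j]
      _ = ∑ j, ∑ i, (Q i j)^2 * (x i * y j) := by
          refine Finset.sum_congr rfl fun j _ => ?_
          rw [Finset.sum_mul]
          exact Finset.sum_congr rfl fun i _ => by ring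
      _ = ∑ i, ∑ j, (Q i j)^2 * (x i * y j) := Finset.sum_comm
  rw [htr]
  have hS : Matrix.of (fun i j => (Q i j)^2) ∈ doublyStochastic ℝ (Fin n) := by
    rw [mem_doublyStochastic_iff_sum]
    refine ⟨fun i j => by simp only [Matrix.of_apply]; exact sq_nonneg _, fun i => ?_, fun j => ?_⟩
    · have := congrArg (fun M => M i i) hQ1
      simpa [Matrix.mul_apply, sq] using this
    · have := congrArg (fun M => M j j) hQ2
      simpa [Matrix.mul_apply, sq] using this
  exact aux_ds_rearrange _ hS hxa hya

lemma aux_dotp_comp (x y : Fin n → ℝ) (σ : Equiv.Perm (Fin n)) :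
    dotp (x ∘ σ) (y ∘ σ) = dotp x y := by
  unfold dotp
  exact Fintype.sum_equiv σ _ _ fun i => rfl

/-- For a symmetric function `f`, the Fenchel conjugate `f*` is symmetric and the spectral
functions satisfy `(f ∘ λ)* = f* ∘ λ` on the symmetric matrices. -/
theorem spectral_conjugacy (f : (Fin n → ℝ) → EReal)
    (hf : ∀ (σ : Equiv.Perm (Fin n)) (x : Fin n → ℝ), f (x ∘ σ) = f x)
    (F : Matrix (Fin n) (Fin n) ℝ → EReal)
    (hF : ∀ (X : Matrix (Fin n) (Fin n) ℝ) (x : Fin n → ℝ), eigPred X x → F X = f x) :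
    (∀ (σ : Equiv.Perm (Fin n)) (y : Fin n → ℝ), fconj f (y ∘ σ) = fconj f y) ∧
    ∀ (Y : Matrix (Fin n) (Fin n) ℝ) (y : Fin n → ℝ), eigPred Y y →
      mconj F Y = fconj f y := by
  have hsym : ∀ (σ : Equiv.Perm (Fin n)) (y : Fin n → ℝ), fconj f (y ∘ σ) ≤ fconj f y := by
    intro σ y
    refine iSup_le fun x => ?_
    refine le_iSup_of_le (x ∘ ⇑σ.symm) (le_of_eq ?_)
    have h1 : dotp x (y ∘ σ) = dotp (x ∘ ⇑σ.symm) y := by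
      rw [← aux_dotp_comp (x ∘ ⇑σ.symm) y σ]
      congr 1
      funext i
      simp only [Function.comp_apply, Equiv.symm_apply_apply]
    have h2 : f x = f (x ∘ ⇑σ.symm) := by
      rw [← hf σ (x ∘ ⇑σ.symm)]
      congr 1
      funext i
      simp only [Function.comp_apply, Equiv.symm_apply_apply]
    rw [h1, h2]
  refine ⟨fun σ y => le_antisymm (hsym σ y) ?_, ?_⟩
  · have h := hsym σ.symm (y ∘ σ)
    have hyy : (y ∘ ⇑σ) ∘ ⇑σ.symm = y := by
      funext i; simp only [Function.comp_apply, Equiv.apply_symm_apply]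
    rwa [hyy] at h
  · rintro Y y hY
    obtain ⟨hya, U, hU, hYd⟩ := hY
    have hUU : U * Uᵀ = 1 := mul_eq_one_comm.mp hU
    apply le_antisymm
    · refine iSup_le fun X => ?_
      obtain ⟨x, hx⟩ := aux_eig_exists X.1 X.2
      have htr : Matrix.trace (X.1 * Y) ≤ dotp x y := aux_trace_le hx ⟨hya, U, hU, hYd⟩
      have hFX : F X.1 = f x := hF _ _ hx
      refine le_trans ?_ (le_iSup (fun x => ((dotp x y : ℝ) : EReal) - f x) x)
      rw [hFX]
      exact EReal.sub_le_sub (EReal.coe_le_coe_iff.2 htr) le_rfl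
    · refine iSup_le fun x => ?_
      set X : Matrix (Fin n) (Fin n) ℝ := Uᵀ * Matrix.diagonal x * U with hXdef
      have hXs : X.IsSymm := by
        rw [Matrix.IsSymm, hXdef, Matrix.transpose_mul, Matrix.transpose_mul,
          Matrix.transpose_transpose, Matrix.diagonal_transpose]
        noncomm_ring
      have htr : Matrix.trace (X * Y) = dotp x y := by
        have h1 : X * Y = Uᵀ * (Matrix.diagonal x * (U * Uᵀ) * Matrix.diagonal y) * U := by
          rw [hXdef, hYd]; noncomm_ring
        rw [h1, hUU, Matrix.mul_one, Matrix.trace_mul_comm,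
          ← Matrix.mul_assoc, ← Matrix.mul_assoc, hUU, Matrix.one_mul,
          Matrix.diagonal_mul_diagonal, Matrix.trace_diagonal]
        rfl
      have hFX : F X = f x := by
        obtain ⟨σ, hσ⟩ := aux_eig_of_decomp U x hU
        rw [hF X (x ∘ σ) hσ, hf σ x]
      refine le_trans (le_of_eq ?_)
        (le_iSup (fun X : {A : Matrix (Fin n) (Fin n) ℝ // A.IsSymm} =>
          ((Matrix.trace (X.1 * Y) : ℝ) : EReal) - F X.1) ⟨X, hXs⟩)
      rw [htr, hFX]
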